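/- arXiv:1401.6959 — 5 statements merged into one kernel-verified Lean document; each statement's English description precedes it below -/
import Mathlib

section
/- If two Gumbel distributions have the same median M and scale parameters a+ε and a−ε with 0 < ε < a/2, then their cumulative distribution functions differ pointwise by at most ε/a; that is, for all real x, |F₁(x) − F₂(x)| ≤ ε/a where Fᵢ(x) = 2^(−exp(−(x−M)/aᵢ)) with a₁ = a+ε, a₂ = a−ε. -/
open Real

-- helper: y * exp (-y) ≤ exp (-1)
lemma aux_mul_exp_le (y : ℝ) : y * Real.exp (-y) ≤ Real.exp (-1) := by
  rcases le_or_gt y 0 with h | h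
  · have : y * Real.exp (-y) ≤ 0 := mul_nonpos_of_nonpos_of_nonneg h (Real.exp_pos _).le
    linarith [Real.exp_pos (-1 : ℝ)]
  · have h1 : y ≤ Real.exp (y - 1) := by
      have := Real.add_one_le_exp (y - 1)
      linarith
    calc y * Real.exp (-y) ≤ Real.exp (y - 1) * Real.exp (-y) := by
          exact mul_le_mul_of_nonneg_right h1 (Real.exp_pos _).le
      _ = Real.exp (-1) := by rw [← Real.exp_add]; ring_nf

-- helper: log w ≤ w / e for w > 0
lemma aux_log_le (w : ℝ) (hw : 0 < w) : Real.log w ≤ w / Real.exp 1 := by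
  have h := Real.log_le_sub_one_of_pos (show 0 < w / Real.exp 1 by positivity)
  rw [Real.log_div (ne_of_gt hw) (ne_of_gt (Real.exp_pos 1)), Real.log_exp] at h
  linarith

lemma phi_bound (v : ℝ) :
    |Real.exp (-Real.exp (-(v)) * Real.log 2) * (-(Real.exp (-(v)) * v) * Real.log 2)| ≤ 1/3 := by
  have hL : (0.6931471803 : ℝ) < Real.log 2 := Real.log_two_gt_d9
  have hL1 : Real.log 2 < 0.6931471808 := Real.log_two_lt_d9
  have he : (2.7182818283 : ℝ) < Real.exp 1 := Real.exp_one_gt_d9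
  set z := Real.exp (-v) with hz
  have hzpos : 0 < z := Real.exp_pos _
  have habs : |Real.exp (-z * Real.log 2) * (-(z * v) * Real.log 2)|
      = Real.exp (-z * Real.log 2) * (z * |v| * Real.log 2) := by
    rw [abs_mul, abs_of_pos (Real.exp_pos _), abs_mul, abs_neg, abs_mul,
      abs_of_pos hzpos, abs_of_pos (by linarith : (0:ℝ) < Real.log 2)]
  rw [habs]
  rcases le_or_gt 0 v with hv | hv
  · -- z = exp(-v) ≤ 1, |v| = v, use v * exp(-v) ≤ 1/e
    rw [abs_of_nonneg hv]
    have h1 : z * v ≤ Real.exp (-1) := by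
      have := aux_mul_exp_le v; rw [← hz] at this; linarith [mul_comm z v]
    have h2 : Real.exp (-z * Real.log 2) ≤ 1 := by
      apply Real.exp_le_one_iff.mpr
      nlinarith
    have hinv : Real.exp (-1) = (Real.exp 1)⁻¹ := by
      rw [Real.exp_neg]
    calc Real.exp (-z * Real.log 2) * (z * v * Real.log 2)
        ≤ 1 * (Real.exp (-1) * Real.log 2) := by
          apply mul_le_mul h2 (by nlinarith) (by positivity) zero_le_one
      _ = (Real.exp 1)⁻¹ * Real.log 2 := by rw [one_mul, hinv]
      _ ≤ 1/3 := by
          rw [inv_mul_le_iff₀ (by linarith)]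
          nlinarith
  · -- v < 0, z > 1, |v| = -v = log z ≤ z / e
    have hvlog : -v = Real.log z := by rw [hz, Real.log_exp]
    rw [abs_of_neg hv]
    have hlog : Real.log z ≤ z / Real.exp 1 := aux_log_le z hzpos
    have hsq : z ^ 2 * Real.exp (-z * Real.log 2) ≤ 4 / (Real.log 2 ^ 2 * Real.exp 1 ^ 2) := by
      have hy := aux_mul_exp_le (Real.log 2 * z / 2)
      have hynn : 0 ≤ Real.log 2 * z / 2 := by positivity
      have hsq1 : (Real.log 2 * z / 2 * Real.exp (-(Real.log 2 * z / 2))) ^ 2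
          ≤ Real.exp (-1) ^ 2 := by
        apply sq_le_sq' _ hy
        nlinarith [Real.exp_pos (-(Real.log 2 * z / 2)), mul_nonneg hynn (Real.exp_pos (-(Real.log 2 * z / 2))).le, Real.exp_pos (-1:ℝ)]
      have hexp2 : Real.exp (-(Real.log 2 * z / 2)) ^ 2 = Real.exp (-z * Real.log 2) := by
        rw [← Real.exp_nat_mul]
        norm_num; ring_nf
      have hexp1 : Real.exp (-1:ℝ) ^ 2 = (Real.exp 1 ^ 2)⁻¹ := by
        rw [Real.exp_neg]; rw [inv_pow]
      rw [mul_pow, hexp2, hexp1] at hsq1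
      have hLpos : (0:ℝ) < Real.log 2 := by linarith
      have : Real.log 2 ^ 2 * z ^ 2 / 4 * Real.exp (-z * Real.log 2) ≤ (Real.exp 1 ^ 2)⁻¹ := by
        calc Real.log 2 ^ 2 * z ^ 2 / 4 * Real.exp (-z * Real.log 2)
            = (Real.log 2 * z / 2) ^ 2 * Real.exp (-z * Real.log 2) := by ring
          _ ≤ (Real.exp 1 ^ 2)⁻¹ := hsq1
      have hE2 : (0:ℝ) < Real.exp 1 ^ 2 := by positivity
      rw [le_div_iff₀ (by positivity)]
      have hinv : (Real.exp 1 ^ 2)⁻¹ * Real.exp 1 ^ 2 = 1 := inv_mul_cancel₀ (ne_of_gt hE2)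
      nlinarith [mul_le_mul_of_nonneg_right this hE2.le]
    have hepos : (0:ℝ) < Real.exp 1 := Real.exp_pos 1
    calc Real.exp (-z * Real.log 2) * (z * -v * Real.log 2)
        = z * Real.log z * Real.exp (-z * Real.log 2) * Real.log 2 := by
          rw [hvlog]; ring
      _ ≤ z * (z / Real.exp 1) * Real.exp (-z * Real.log 2) * Real.log 2 := by
          apply mul_le_mul_of_nonneg_right _ (by linarith)
          apply mul_le_mul_of_nonneg_right _ (Real.exp_pos _).le
          exact mul_le_mul_of_nonneg_left hlog hzpos.le
      _ = (z ^ 2 * Real.exp (-z * Real.log 2)) * (Real.log 2 / Real.exp 1) := by ring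
      _ ≤ (4 / (Real.log 2 ^ 2 * Real.exp 1 ^ 2)) * (Real.log 2 / Real.exp 1) := by
          apply mul_le_mul_of_nonneg_right hsq (by positivity)
      _ ≤ 1/3 := by
          have he3 : (20:ℝ) < Real.exp 1 ^ 3 := by nlinarith
          rw [div_mul_div_comm, div_le_div_iff₀ (by positivity) (by norm_num)]
          nlinarith [he3, mul_pos (mul_pos hepos hepos) hepos]

/-- Lemma of Common Median: two Gumbel distributions with common median `M`
and scales `a+ε`, `a−ε` (with `0 < ε < a/2`) have cdfs differing by at most `ε/a`. -/
theorem gumbel_common_median (a ε M : ℝ) (hε : 0 < ε) (hεa : ε < a / 2) :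
    ∀ x : ℝ,
      |(2 : ℝ) ^ (-Real.exp (-(x - M) / (a + ε))) -
        (2 : ℝ) ^ (-Real.exp (-(x - M) / (a - ε)))| ≤ ε / a := by
  intro x
  have ha : 0 < a := by linarith
  have hap : 0 < a + ε := by linarith
  have ham : 0 < a - ε := by linarith
  set t := x - M with ht
  -- the function of the log-scale
  set f : ℝ → ℝ := fun s => Real.exp (-Real.exp (-(t * Real.exp (-s))) * Real.log 2) with hf
  set f' : ℝ → ℝ := fun s =>
    Real.exp (-Real.exp (-(t * Real.exp (-s))) * Real.log 2) *
      (-(Real.exp (-(t * Real.exp (-s))) * (t * Real.exp (-s))) * Real.log 2) with hf'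
  have hderiv : ∀ s : ℝ, HasDerivAt f (f' s) s := by
    intro s
    have h0 : HasDerivAt (fun u : ℝ => t * Real.exp (-u)) (-(t * Real.exp (-s))) s := by
      have := ((hasDerivAt_id s).neg.exp).const_mul t
      simp only [Pi.neg_apply, id_eq] at this
      exact this.congr_deriv (by ring)
    have h1 := h0.neg.exp
    have h2 := (h1.neg.mul_const (Real.log 2)).exp
    simp only [Pi.neg_apply] at h2
    convert h2 using 1
    ring
  have hbound : ∀ s : ℝ, ‖f' s‖ ≤ 1/3 := by
    intro s
    have := phi_bound (t * Real.exp (-s))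
    simpa only [hf', Real.norm_eq_abs] using this
  -- MVT
  have key : ∀ y z : ℝ, ‖f y - f z‖ ≤ 1/3 * ‖y - z‖ := by
    intro y z
    exact Convex.norm_image_sub_le_of_norm_hasDerivWithin_le
      (fun u _ => (hderiv u).hasDerivWithinAt) (fun u _ => hbound u)
      convex_univ (Set.mem_univ z) (Set.mem_univ y)
  have hmvt := key (Real.log (a + ε)) (Real.log (a - ε))
  -- identify f at the endpoints with the rpow expressions
  have hfp : f (Real.log (a + ε)) = (2 : ℝ) ^ (-Real.exp (-t / (a + ε))) := by
    rw [Real.rpow_def_of_pos (by norm_num : (0:ℝ) < 2)]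
    simp only [hf]
    rw [show Real.exp (-Real.log (a + ε)) = (a + ε)⁻¹ by
      rw [Real.exp_neg, Real.exp_log hap]]
    congr 1
    rw [show -(t * (a + ε)⁻¹) = -t / (a + ε) by ring]
    ring
  have hfm : f (Real.log (a - ε)) = (2 : ℝ) ^ (-Real.exp (-t / (a - ε))) := by
    rw [Real.rpow_def_of_pos (by norm_num : (0:ℝ) < 2)]
    simp only [hf]
    rw [show Real.exp (-Real.log (a - ε)) = (a - ε)⁻¹ by
      rw [Real.exp_neg, Real.exp_log ham]]
    congr 1
    rw [show -(t * (a - ε)⁻¹) = -t / (a - ε) by ring]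
    ring
  rw [hfp, hfm, Real.norm_eq_abs, Real.norm_eq_abs] at hmvt
  -- bound the log difference
  have hlogd : Real.log (a + ε) - Real.log (a - ε) ≤ 3 * (ε / a) := by
    have h1 : Real.log (a + ε) - Real.log a ≤ ε / a := by
      have := Real.log_le_sub_one_of_pos (show 0 < (a + ε) / a by positivity)
      rw [Real.log_div (ne_of_gt hap) (ne_of_gt ha)] at this
      have : Real.log (a + ε) - Real.log a ≤ (a + ε) / a - 1 := this
      calc Real.log (a + ε) - Real.log a ≤ (a + ε) / a - 1 := this
        _ = ε / a := by field_simp; ring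
    have h2 : Real.log a - Real.log (a - ε) ≤ 2 * (ε / a) := by
      have h := Real.log_le_sub_one_of_pos (show 0 < a / (a - ε) by positivity)
      rw [Real.log_div (ne_of_gt ha) (ne_of_gt ham)] at h
      have heq : a / (a - ε) - 1 = ε / (a - ε) := by field_simp; ring
      rw [heq] at h
      have : ε / (a - ε) ≤ 2 * (ε / a) := by
        rw [div_le_iff₀ ham]
        have : 2 * (ε / a) * (a - ε) = 2 * ε * (a - ε) / a := by ring
        rw [this, le_div_iff₀ ha]
        nlinarith
      linarith
    linarith
  have hlogpos : 0 ≤ Real.log (a + ε) - Real.log (a - ε) := by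
    have := Real.log_le_log ham (by linarith : a - ε ≤ a + ε)
    linarith
  rw [abs_of_nonneg hlogpos] at hmvt
  calc |(2 : ℝ) ^ (-Real.exp (-t / (a + ε))) - (2 : ℝ) ^ (-Real.exp (-t / (a - ε)))|
      ≤ 1/3 * (Real.log (a + ε) - Real.log (a - ε)) := hmvt
    _ ≤ 1/3 * (3 * (ε / a)) := by linarith
    _ = ε / a := by ring
end

section
/- The survival function of the Gumbel distribution, 1 − F(x) = 1 − exp(−exp(−(x−μ)/a)) with a > 0, is log-concave on ℝ. -/
open Real

private lemma gumbel_key {p q : ℝ} (hp : 0 < p) (hpq : p ≤ q) :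
    q * (Real.exp p - 1) ≤ p * (Real.exp q - 1) := by
  have hq : 0 < q := lt_of_lt_of_le hp hpq
  have h1 : (0:ℝ) ≤ 1 - p / q := by
    have : p / q ≤ 1 := (div_le_one hq).2 hpq
    linarith
  have h2 : (0:ℝ) ≤ p / q := le_of_lt (div_pos hp hq)
  have h3 : (1 - p / q) + p / q = 1 := by ring
  have hcx := convexOn_exp.2 (Set.mem_univ (0:ℝ)) (Set.mem_univ q) h1 h2 h3
  have hpt : (1 - p / q) • (0:ℝ) + (p / q) • q = p := by
    field_simp
    rw [smul_zero, zero_add, smul_eq_mul]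
    field_simp
  rw [hpt] at hcx
  simp only [smul_eq_mul, Real.exp_zero, mul_one] at hcx
  have hdiv : Real.exp p - 1 ≤ (p / q) * (Real.exp q - 1) := by linarith
  calc q * (Real.exp p - 1) ≤ q * ((p / q) * (Real.exp q - 1)) :=
        mul_le_mul_of_nonneg_left hdiv hq.le
    _ = p * (Real.exp q - 1) := by field_simp

/-- The Gumbel survival function `1 − F(x) = 1 − exp(−exp(−(x−μ)/a))` is log-concave on ℝ. -/
theorem gumbel_survival_logConcave (a μ : ℝ) (ha : 0 < a) :
    ConcaveOn ℝ Set.univ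
      (fun x : ℝ => Real.log (1 - Real.exp (-Real.exp (-(x - μ) / a)))) := by
  set f : ℝ → ℝ := fun x => Real.log (1 - Real.exp (-Real.exp (-(x - μ) / a))) with hf_def
  set d : ℝ → ℝ := fun x =>
    -(Real.exp (-(x - μ) / a) / (a * (Real.exp (Real.exp (-(x - μ) / a)) - 1))) with hd_def
  have hpos : ∀ x : ℝ, 0 < 1 - Real.exp (-Real.exp (-(x - μ) / a)) := by
    intro x
    have h1 : Real.exp (-Real.exp (-(x - μ) / a)) < 1 :=
      Real.exp_lt_one_iff.2 (neg_lt_zero.2 (Real.exp_pos _))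
    linarith
  have hderiv : ∀ x : ℝ, HasDerivAt f (d x) x := by
    intro x
    have h1 : HasDerivAt (fun x : ℝ => -(x - μ) / a) (-1 / a) x := by
      simpa using (((hasDerivAt_id x).sub_const μ).neg.div_const a)
    have h6 := (h1.exp.neg.exp.const_sub 1).log (ne_of_gt (hpos x))
    convert h6 using 1
    · rfl
    have hE := Real.exp_pos (-(x - μ) / a)
    have hEE := Real.exp_pos (Real.exp (-(x - μ) / a))
    have hgt1 : (1:ℝ) < Real.exp (Real.exp (-(x - μ) / a)) := Real.one_lt_exp_iff.2 hE
    have hne : Real.exp (Real.exp (-(x - μ) / a)) - 1 ≠ 0 := by linarith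
    rw [hd_def]
    have hane : a * (Real.exp (Real.exp (-(x - μ) / a)) - 1) ≠ 0 :=
      ne_of_gt (mul_pos ha (by linarith))
    have h1ne : 1 - (Real.exp (Real.exp (-(x - μ) / a)))⁻¹ ≠ 0 := by
      have : (Real.exp (Real.exp (-(x - μ) / a)))⁻¹ < 1 := by
        rw [inv_lt_one_iff₀]; right; exact hgt1
      · linarith
    simp only [Pi.neg_apply, Real.exp_neg]
    rw [← neg_div, div_eq_div_iff hane h1ne]
    field_simp [ha.ne']
  apply AntitoneOn.concaveOn_of_deriv convex_univ
  · exact fun x _ => (hderiv x).continuousAt.continuousWithinAt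
  · rw [interior_univ]
    exact fun x _ => (hderiv x).differentiableAt.differentiableWithinAt
  · rw [interior_univ]
    intro x _ y _ hxy
    rw [(hderiv x).deriv, (hderiv y).deriv, hd_def]
    simp only
    set p := Real.exp (-(y - μ) / a) with hp_def
    set q := Real.exp (-(x - μ) / a) with hq_def
    have hp : 0 < p := Real.exp_pos _
    have hq : 0 < q := Real.exp_pos _
    have hpq : p ≤ q := by
      rw [hp_def, hq_def, Real.exp_le_exp]
      gcongr
    have hEp : (1:ℝ) < Real.exp p := Real.one_lt_exp_iff.2 hp
    have hEq : (1:ℝ) < Real.exp q := Real.one_lt_exp_iff.2 hq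
    have hdp : 0 < a * (Real.exp p - 1) := mul_pos ha (by linarith)
    have hdq : 0 < a * (Real.exp q - 1) := mul_pos ha (by linarith)
    have key := gumbel_key hp hpq
    rw [neg_le_neg_iff, div_le_div_iff₀ hdq hdp]
    nlinarith [mul_le_mul_of_nonneg_left key ha.le]
  done
end

section
/- If a probability density f : ℝ → (0,∞) is log-concave, then its cumulative distribution function F(x) = ∫_{−∞}^{x} f(t) dt is log-concave wherever it is positive. -/
open MeasureTheory

set_option maxHeartbeats 1000000

/-- If a continuous positive integrable probability density `f` is log-concave,
then its cdf `F(x) = ∫_{−∞}^x f` is log-concave (it is positive everywhere). -/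
theorem cdf_logConcave_of_pdf_logConcave (f : ℝ → ℝ)
    (hcont : Continuous f) (hpos : ∀ x, 0 < f x)
    (hint : Integrable f) (hone : ∫ t, f t = 1)
    (hlc : ConcaveOn ℝ Set.univ fun x => Real.log (f x)) :
    ConcaveOn ℝ Set.univ fun x => Real.log (∫ t in Set.Iic x, f t) := by
  set F : ℝ → ℝ := fun x => ∫ t in Set.Iic x, f t with hF
  -- F is positive
  have hFpos : ∀ x, 0 < F x := by
    intro x
    have h1 := intervalIntegral.integral_Iic_sub_Iic (f := f) (μ := volume) (a := x-1) (b := x)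
      hint.integrableOn hint.integrableOn
    have h2 : 0 < ∫ t in (x-1)..x, f t :=
      intervalIntegral.intervalIntegral_pos_of_pos hint.intervalIntegrable
        (fun t => hpos t) (by linarith)
    have h3 : 0 ≤ F (x - 1) := setIntegral_nonneg measurableSet_Iic fun t _ => (hpos t).le
    linarith
  -- F has derivative f
  have hFderiv : ∀ x, HasDerivAt F (f x) x := by
    intro x
    have key : ∀ u : ℝ, F u = F 0 + ∫ t in (0:ℝ)..u, f t := by
      intro u
      have h := intervalIntegral.integral_Iic_sub_Iic (μ := volume) (f := f) (a := (0:ℝ)) (b := u)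
        hint.integrableOn hint.integrableOn
      simp only [hF]
      linarith [h]
    have h : HasDerivAt (fun u => F 0 + ∫ t in (0:ℝ)..u, f t) (f x) x := by
      refine HasDerivAt.const_add _ ?_
      exact intervalIntegral.integral_hasDerivAt_right hint.intervalIntegrable
        hcont.stronglyMeasurable.stronglyMeasurableAtFilter hcont.continuousAt
    have : (fun u => F 0 + ∫ t in (0:ℝ)..u, f t) = F := funext fun u => (key u).symm
    rwa [this] at h
  -- pointwise log-concavity consequence
  have hkey : ∀ t x y : ℝ, t ≤ x → x ≤ y → f y * f t ≤ f x * f (t + (y - x)) := by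
    intro t x y htx hxy
    rcases eq_or_lt_of_le (htx.trans hxy) with h | h
    · subst h
      have : x = t := le_antisymm hxy htx
      subst this
      simp
    · -- t < y
      set a : ℝ := (y - x) / (y - t)
      set b : ℝ := (x - t) / (y - t)
      have hyt : (0:ℝ) < y - t := by linarith
      have ha : 0 ≤ a := div_nonneg (by linarith) hyt.le
      have hb : 0 ≤ b := div_nonneg (by linarith) hyt.le
      have hab : a + b = 1 := by show (y - x) / (y - t) + (x - t) / (y - t) = 1; field_simp; ring
      have e1 : a * t + b * y = x := by show (y - x) / (y - t) * t + (x - t) / (y - t) * y = x; field_simp; ring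
      have e2 : b * t + a * y = t + (y - x) := by show (x - t) / (y - t) * t + (y - x) / (y - t) * y = t + (y - x); field_simp; ring
      have i1 := hlc.2 (Set.mem_univ t) (Set.mem_univ y) ha hb hab
      have i2 := hlc.2 (Set.mem_univ t) (Set.mem_univ y) hb ha (by linarith)
      simp only [smul_eq_mul] at i1 i2
      rw [e1] at i1
      rw [e2] at i2
      have hsum : Real.log (f y) + Real.log (f t) ≤
          Real.log (f x) + Real.log (f (t + (y - x))) := by
        have e3 : a * Real.log (f t) + b * Real.log (f t) = Real.log (f t) := by
          rw [← add_mul, hab, one_mul]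
        have e4 : a * Real.log (f y) + b * Real.log (f y) = Real.log (f y) := by
          rw [← add_mul, hab, one_mul]
        linarith [i1, i2]
      have := Real.exp_le_exp.2 hsum
      rwa [Real.exp_add, Real.exp_add, Real.exp_log (hpos _), Real.exp_log (hpos _),
        Real.exp_log (hpos _), Real.exp_log (hpos _)] at this
  -- translation identity
  have htrans : ∀ x y : ℝ, F y = ∫ t in Set.Iic x, f (t + (y - x)) := by
    intro x y
    have h1 : (fun t => (Set.Iic x).indicator (fun t => f (t + (y - x))) t)
        = fun t => (Set.Iic y).indicator f (t + (y - x)) := by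
      funext t
      simp only [Set.indicator_apply, Set.mem_Iic]
      by_cases ht : t ≤ x
      · rw [if_pos ht, if_pos (by linarith)]
      · rw [if_neg ht, if_neg (fun h => ht (by linarith))]
    rw [← integral_indicator measurableSet_Iic, h1,
      integral_add_right_eq_self ((Set.Iic y).indicator f) (y - x),
      integral_indicator measurableSet_Iic]
  -- antitonicity of f/F
  have hanti : Antitone (fun x => f x / F x) := by
    intro x y hxy
    rw [div_le_div_iff₀ (hFpos y) (hFpos x)]
    have hL : f y * F x = ∫ t in Set.Iic x, f y * f t := by
      rw [hF, ← integral_const_mul]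
    have hR : f x * F y = ∫ t in Set.Iic x, f x * f (t + (y - x)) := by
      rw [htrans x y, ← integral_const_mul]
    rw [hL, hR]
    have hi1 : IntegrableOn (fun t => f y * f t) (Set.Iic x) :=
      (hint.const_mul (f y)).integrableOn
    have hi2 : IntegrableOn (fun t => f x * f (t + (y - x))) (Set.Iic x) :=
      ((hint.comp_add_right (y - x)).const_mul (f x)).integrableOn
    exact setIntegral_mono_on hi1 hi2 measurableSet_Iic
      (fun t ht => hkey t x y ht hxy)
  -- conclude
  have hFdiff : Differentiable ℝ fun x => Real.log (F x) :=
    fun x => ((hFderiv x).log (hFpos x).ne').differentiableAt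
  have hderiv_eq : deriv (fun x => Real.log (F x)) = fun x => f x / F x := by
    funext x
    exact ((hFderiv x).log (hFpos x).ne').deriv
  have := Antitone.concaveOn_univ_of_deriv hFdiff (by rw [hderiv_eq]; exact hanti)
  exact this
end

section
/- If a probability density f : ℝ → (0,∞) is log-concave, then the survival function 1 − F(x) = ∫_{x}^{∞} f(t) dt is log-concave wherever it is positive. -/
open MeasureTheory

open Set in
private lemma survival_aux (f : ℝ → ℝ)
    (hcont : Continuous f) (hpos : ∀ x, 0 < f x)
    (hint : Integrable f) :
    ∀ x y : ℝ, x ≤ y →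
      (∫ t in Set.Ioi x, f t) = (∫ t in Set.Ioc x y, f t) + ∫ t in Set.Ioi y, f t := by
  intro x y hxy
  rw [← setIntegral_union]
  · rw [Ioc_union_Ioi_eq_Ioi hxy]
  · exact Set.Ioc_disjoint_Ioi le_rfl
  · exact measurableSet_Ioi
  · exact hint.integrableOn
  · exact hint.integrableOn

/-- If a continuous positive integrable probability density `f` is log-concave,
then its survival function `1 − F(x) = ∫_x^∞ f` is log-concave (it is positive everywhere). -/
theorem survival_logConcave_of_pdf_logConcave (f : ℝ → ℝ)
    (hcont : Continuous f) (hpos : ∀ x, 0 < f x)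
    (hint : Integrable f) (hone : ∫ t, f t = 1)
    (hlc : ConcaveOn ℝ Set.univ fun x => Real.log (f x)) :
    ConcaveOn ℝ Set.univ fun x => Real.log (∫ t in Set.Ioi x, f t) := by
  set G : ℝ → ℝ := fun x => ∫ t in Set.Ioi x, f t with hGdef
  -- G is positive
  have hGpos : ∀ x, 0 < G x := by
    intro x
    have h1 : (∫ t in Set.Ioc x (x + 1), f t) ≤ G x := by
      rw [hGdef]
      simp only
      rw [survival_aux f hcont hpos hint x (x + 1) (by linarith)]
      have : 0 ≤ ∫ t in Set.Ioi (x + 1), f t :=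
        setIntegral_nonneg measurableSet_Ioi fun t _ => (hpos t).le
      linarith
    have h2 : 0 < ∫ t in Set.Ioc x (x + 1), f t := by
      have := intervalIntegral.intervalIntegral_pos_of_pos (f := f) (a := x) (b := x + 1)
        (hint.intervalIntegrable) hpos (by linarith)
      rwa [intervalIntegral.integral_of_le (by linarith : x ≤ x + 1)] at this
    linarith
  -- key pointwise log-concavity inequality
  have hkey : ∀ x y : ℝ, x ≤ y → f x * G y ≤ f y * G x := by
    intro x y hxy
    have hmp : MeasurePreserving (fun t : ℝ => t + (x - y)) volume volume :=
      measurePreserving_add_right volume (x - y)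
    have hemb : MeasurableEmbedding (fun t : ℝ => t + (x - y)) :=
      (MeasurableEquiv.addRight (x - y)).measurableEmbedding
    have htrans : (∫ t in Set.Ioi y, f (t + (x - y))) = ∫ t in Set.Ioi x, f t := by
      have hpre : (fun t : ℝ => t + (x - y)) ⁻¹' Set.Ioi x = Set.Ioi y := by
        ext t; simp only [Set.mem_preimage, Set.mem_Ioi]
        constructor <;> intro h <;> linarith
      rw [← hpre]
      exact hmp.setIntegral_preimage_emb hemb f (Set.Ioi x)
    -- pointwise inequality for t > y
    have hpt : ∀ t ∈ Set.Ioi y, f x * f t ≤ f y * f (t + (x - y)) := by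
      intro t ht
      rcases eq_or_lt_of_le hxy with rfl | hxy'
      · simp
      · have hxt : x < t := lt_trans hxy' ht
        set lam : ℝ := (t - y) / (t - x) with hlam
        have htx : 0 < t - x := by linarith
        have hl0 : 0 ≤ lam := div_nonneg (by simp only [Set.mem_Ioi] at ht; linarith) htx.le
        have hl1 : lam ≤ 1 := by
          rw [hlam, div_le_one htx]; linarith
        have hsum : lam + (1 - lam) = 1 := by ring
        have hy_eq : lam * x + (1 - lam) * t = y := by
          field_simp [hlam]
          have h' : lam * (t - x) = t - y := by rw [hlam]; exact div_mul_cancel₀ _ htx.ne'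
          linear_combination -h'
        have hz_eq : (1 - lam) * x + lam * t = t + (x - y) := by
          have h1 : (1 : ℝ) - lam = (y - x) / (t - x) := by
            rw [hlam]; field_simp; ring
          rw [h1, hlam]
          field_simp
          ring
        have c1 := hlc.2 (Set.mem_univ x) (Set.mem_univ t) hl0 (by linarith) hsum
        have c2 := hlc.2 (Set.mem_univ x) (Set.mem_univ t) (by linarith : (0:ℝ) ≤ 1 - lam)
          hl0 (by ring)
        simp only [smul_eq_mul] at c1 c2
        rw [hy_eq] at c1
        rw [hz_eq] at c2
        have hlog : Real.log (f x * f t) ≤ Real.log (f y * f (t + (x - y))) := by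
          rw [Real.log_mul (hpos x).ne' (hpos t).ne',
            Real.log_mul (hpos y).ne' (hpos _).ne']
          nlinarith [c1, c2]
        exact (Real.log_le_log_iff (mul_pos (hpos x) (hpos t))
          (mul_pos (hpos y) (hpos _))).mp hlog
    have hint1 : IntegrableOn (fun t => f x * f t) (Set.Ioi y) volume :=
      (hint.integrableOn).const_mul _
    have hint2 : IntegrableOn (fun t => f y * f (t + (x - y))) (Set.Ioi y) volume := by
      have : Integrable (fun t => f (t + (x - y))) volume := hint.comp_add_right (x - y)
      exact (this.integrableOn).const_mul _
    calc f x * G y = ∫ t in Set.Ioi y, f x * f t := by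
          rw [hGdef]; exact (integral_const_mul _ _).symm
      _ ≤ ∫ t in Set.Ioi y, f y * f (t + (x - y)) :=
          setIntegral_mono_on hint1 hint2 measurableSet_Ioi hpt
      _ = f y * ∫ t in Set.Ioi y, f (t + (x - y)) := integral_const_mul _ _
      _ = f y * G x := by rw [htrans]
  -- G has derivative -f x
  have hGderiv : ∀ x, HasDerivAt G (-(f x)) x := by
    intro x
    have hrepr : ∀ u : ℝ, G u = G 0 - ∫ t in (0:ℝ)..u, f t := by
      intro u
      rcases le_total 0 u with h | h
      · rw [intervalIntegral.integral_of_le h]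
        have := survival_aux f hcont hpos hint 0 u h
        simp only [hGdef]
        linarith [this]
      · rw [intervalIntegral.integral_symm, intervalIntegral.integral_of_le h]
        have := survival_aux f hcont hpos hint u 0 h
        simp only [hGdef]
        linarith [this]
      
    have hFTC : HasDerivAt (fun u => ∫ t in (0:ℝ)..u, f t) (f x) x :=
      intervalIntegral.integral_hasDerivAt_right hint.intervalIntegrable
        (hcont.stronglyMeasurable.stronglyMeasurableAtFilter)
        hcont.continuousAt
    have : HasDerivAt (fun u => G 0 - ∫ t in (0:ℝ)..u, f t) (-(f x)) x := by
      exact ((hasDerivAt_const x (G 0)).sub hFTC).congr_deriv (by ring)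
    exact this.congr_of_eventuallyEq (Filter.Eventually.of_forall fun u => hrepr u)
  have hlogderiv : ∀ x, HasDerivAt (fun u => Real.log (G u)) (-(f x) / G x) x :=
    fun x => (hGderiv x).log (hGpos x).ne'
  have hdiff : Differentiable ℝ fun u => Real.log (G u) :=
    fun x => (hlogderiv x).differentiableAt
  have hderiv_eq : ∀ x, deriv (fun u => Real.log (G u)) x = -(f x) / G x :=
    fun x => (hlogderiv x).deriv
  have hanti : Antitone (deriv fun u => Real.log (G u)) := by
    intro x y hxy
    rw [hderiv_eq x, hderiv_eq y]
    rw [div_le_div_iff₀ (hGpos y) (hGpos x)]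
    nlinarith [hkey x y hxy]
  exact Antitone.concaveOn_univ_of_deriv hdiff hanti
end

section
/- Let ℓ : [1,∞) → (0,∞) be a continuous, slowly varying, monotonically decreasing function with ℓ(t) → 0 and ∫_1^∞ ℓ(t) dt = ∞. Then for every fixed λ > 1, Σ_{n < k ≤ λn} ℓ(k) → ∞ as n → ∞. -/
open Filter

set_option maxHeartbeats 1000000 in
/-- Lemma 2: if `ℓ` is continuous, slowly varying, decreasing, positive on `[1,∞)`
with `ℓ(t) → 0` and divergent integral, then for every fixed `l > 1` the sums
`∑_{n < k ≤ ⌊l·n⌋} ℓ(k)` tend to infinity. -/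
theorem sum_between_n_and_lambda_n_tendsto_atTop (ℓ : ℝ → ℝ)
    (hcont : ContinuousOn ℓ (Set.Ici 1))
    (hpos : ∀ t ≥ (1 : ℝ), 0 < ℓ t)
    (hanti : AntitoneOn ℓ (Set.Ici 1))
    (hslow : ∀ l : ℝ, 0 < l → Tendsto (fun t => ℓ (l * t) / ℓ t) atTop (nhds 1))
    (hzero : Tendsto ℓ atTop (nhds 0))
    (hdiv : Tendsto (fun x : ℝ => ∫ t in (1 : ℝ)..x, ℓ t) atTop atTop) :
    ∀ l : ℝ, 1 < l →
      Tendsto (fun n : ℕ => ∑ k ∈ Finset.Ioc n (Nat.floor (l * n)), ℓ k) atTop atTop := by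
  classical
  intro l hl
  have hl0 : (0:ℝ) < l := by linarith
  set δ : ℝ := (1 + l⁻¹) / 2 with hδdef
  have hlinv0 : 0 < l⁻¹ := inv_pos.mpr hl0
  have hlinv1 : l⁻¹ < 1 := inv_lt_one_of_one_lt₀ hl
  have hδ0 : 0 < δ := by rw [hδdef]; linarith
  have hδ1 : δ < 1 := by rw [hδdef]; linarith
  have hli : l * l⁻¹ = 1 := mul_inv_cancel₀ (ne_of_gt hl0)
  have hlδ : 1 < l * δ := by
    rw [hδdef]; nlinarith
  -- ratio bound
  have hev : ∀ᶠ t in atTop, δ ≤ ℓ (l * t) / ℓ t :=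
    (hslow l hl0).eventually (eventually_ge_nhds hδ1)
  obtain ⟨T₀, hT₀⟩ := eventually_atTop.mp hev
  set T : ℝ := max T₀ 1 with hTdef
  have hT1 : (1:ℝ) ≤ T := le_max_right _ _
  have hTpos : (0:ℝ) < T := lt_of_lt_of_le one_pos hT1
  have hratio : ∀ t, T ≤ t → δ * ℓ t ≤ ℓ (l * t) := by
    intro t ht
    have h1t : (1:ℝ) ≤ t := le_trans hT1 ht
    have := hT₀ t (le_trans (le_max_left _ _) ht)
    exact (le_div_iff₀ (hpos t h1t)).mp this
  have hℓT : 0 < ℓ T := hpos T hT1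
  -- powers
  have hlk1 : ∀ k : ℕ, (1:ℝ) ≤ l ^ k := fun k => one_le_pow₀ (le_of_lt hl)
  have hpow : ∀ m : ℕ, δ ^ m * ℓ T ≤ ℓ (l ^ m * T) := by
    intro m
    induction m with
    | zero => simp
    | succ k ih =>
      have hTk : T ≤ l ^ k * T := le_mul_of_one_le_left (le_of_lt hTpos) (hlk1 k)
      have h1 : δ * (δ ^ k * ℓ T) ≤ δ * ℓ (l ^ k * T) :=
        mul_le_mul_of_nonneg_left ih (le_of_lt hδ0)
      have h2 : δ * ℓ (l ^ k * T) ≤ ℓ (l * (l ^ k * T)) := hratio _ hTk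
      have heq : l * (l ^ k * T) = l ^ (k + 1) * T := by rw [pow_succ]; ring
      calc δ ^ (k + 1) * ℓ T = δ * (δ ^ k * ℓ T) := by ring
        _ ≤ δ * ℓ (l ^ k * T) := h1
        _ ≤ ℓ (l * (l ^ k * T)) := h2
        _ = ℓ (l ^ (k + 1) * T) := by rw [heq]
  -- lower bound at each point
  have hlower : ∀ t, T ≤ t →
      ∃ m : ℕ, l ^ m * T ≤ t ∧ t < l ^ (m + 1) * T ∧ δ ^ (m + 1) * ℓ T ≤ ℓ t := by
    intro t ht
    have h1t : (1:ℝ) ≤ t := le_trans hT1 ht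
    have hPex : ∃ m : ℕ, t < l ^ (m + 1) * T := by
      obtain ⟨n, hn⟩ := pow_unbounded_of_one_lt (t / T) hl
      refine ⟨n, ?_⟩
      have h1 : t < l ^ n * T := (div_lt_iff₀ hTpos).mp hn
      have h2 : l ^ n * T ≤ l ^ (n + 1) * T := by
        have : l ^ n ≤ l ^ (n + 1) := pow_le_pow_right₀ (le_of_lt hl) (Nat.le_succ n)
        nlinarith
      linarith
    set m := Nat.find hPex with hmdef
    have hm : t < l ^ (m + 1) * T := Nat.find_spec hPex
    have hmlb : l ^ m * T ≤ t := by
      by_cases h0 : m = 0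
      · rw [h0]; simpa using ht
      · obtain ⟨k, hk⟩ := Nat.exists_eq_succ_of_ne_zero h0
        have hmin := Nat.find_min hPex (show k < m by omega)
        push_neg at hmin
        rw [hk]; exact hmin
    have hm1Ici : l ^ (m + 1) * T ∈ Set.Ici (1:ℝ) :=
      le_trans hT1 (le_mul_of_one_le_left (le_of_lt hTpos) (hlk1 (m + 1)))
    have hanti' : ℓ (l ^ (m + 1) * T) ≤ ℓ t := hanti h1t hm1Ici (le_of_lt hm)
    exact ⟨m, hmlb, hm, le_trans (hpow (m + 1)) hanti'⟩
  -- t * ℓ t → ∞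
  have hC : 0 < T * (δ * ℓ T) := mul_pos hTpos (mul_pos hδ0 hℓT)
  have hg : Tendsto (fun t : ℝ => t * ℓ t) atTop atTop := by
    rw [tendsto_atTop]
    intro M
    obtain ⟨m₀, hm₀⟩ := pow_unbounded_of_one_lt (M / (T * (δ * ℓ T))) hlδ
    filter_upwards [eventually_ge_atTop (max T (l ^ (m₀ + 1) * T))] with t ht
    have htT : T ≤ t := le_trans (le_max_left _ _) ht
    obtain ⟨m, hm1, hm2, hm3⟩ := hlower t htT
    have hmm : m₀ ≤ m := by
      by_contra hc
      push_neg at hc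
      have hle : l ^ (m + 1) ≤ l ^ (m₀ + 1) := pow_le_pow_right₀ (le_of_lt hl) (by omega)
      have h2 := le_trans (le_max_right T (l ^ (m₀ + 1) * T)) ht
      nlinarith
    have hkey : (l * δ) ^ m * (T * (δ * ℓ T)) ≤ t * ℓ t := by
      have h1 : l ^ m * T * (δ ^ (m + 1) * ℓ T) ≤ t * ℓ t :=
        mul_le_mul hm1 hm3 (by positivity) (le_trans (le_of_lt hTpos) htT)
      calc (l * δ) ^ m * (T * (δ * ℓ T)) = l ^ m * T * (δ ^ (m + 1) * ℓ T) := by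
            rw [mul_pow, pow_succ]; ring
        _ ≤ t * ℓ t := h1
    have h2 : (l * δ) ^ m₀ ≤ (l * δ) ^ m := pow_le_pow_right₀ (le_of_lt hlδ) hmm
    have h3 : M < (l * δ) ^ m₀ * (T * (δ * ℓ T)) := by
      rw [div_lt_iff₀ hC] at hm₀; linarith
    have h4 : (l * δ) ^ m₀ * (T * (δ * ℓ T)) ≤ (l * δ) ^ m * (T * (δ * ℓ T)) :=
      mul_le_mul_of_nonneg_right h2 (le_of_lt hC)
    linarith
  have hgN : Tendsto (fun n : ℕ => (n : ℝ) * ℓ n) atTop atTop :=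
    hg.comp tendsto_natCast_atTop_atTop
  have hδl1 : 0 < δ * (l - 1) := mul_pos hδ0 (by linarith)
  have hh : Tendsto (fun n : ℕ => δ * (l - 1) * ((n : ℝ) * ℓ n) + -(δ * ℓ 1)) atTop atTop :=
    tendsto_atTop_add_const_right _ _ (hgN.const_mul_atTop hδl1)
  apply tendsto_atTop_mono' atTop _ hh
  have hNT : ∀ᶠ n : ℕ in atTop, T ≤ (n : ℝ) :=
    tendsto_natCast_atTop_atTop.eventually_ge_atTop T
  have hN2 : ∀ᶠ n : ℕ in atTop, 1 / (l - 1) + 1 ≤ (n : ℝ) :=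
    tendsto_natCast_atTop_atTop.eventually_ge_atTop _
  filter_upwards [hNT, hN2] with n hn1 hn2
  set m := Nat.floor (l * (n : ℝ)) with hmdef
  have h1n : (1:ℝ) ≤ (n : ℝ) := le_trans hT1 hn1
  have hln0 : (0:ℝ) ≤ l * n := by nlinarith
  have hnm : n ≤ m := Nat.le_floor (by nlinarith : (n : ℝ) ≤ l * (n : ℝ))
  have hm1 : (1:ℝ) ≤ (m : ℝ) := le_trans h1n (by exact_mod_cast hnm)
  have hmle : (m : ℝ) ≤ l * (n : ℝ) := Nat.floor_le hln0
  have hterm : ∀ k ∈ Finset.Ioc n m, ℓ m ≤ ℓ k := by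
    intro k hk
    obtain ⟨hk1, hk2⟩ := Finset.mem_Ioc.mp hk
    have h1k : (1:ℝ) ≤ (k : ℝ) := by
      have : 1 ≤ k := by
        have : 1 ≤ n := by exact_mod_cast h1n
        omega
      exact_mod_cast this
    exact hanti h1k hm1 (by exact_mod_cast hk2)
  have hsum : ((Finset.Ioc n m).card : ℝ) * ℓ m ≤ ∑ k ∈ Finset.Ioc n m, ℓ (k : ℝ) := by
    have := Finset.card_nsmul_le_sum (Finset.Ioc n m) (fun k => ℓ (k : ℝ)) (ℓ m) hterm
    simpa [nsmul_eq_mul] using this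
  have hcard : ((Finset.Ioc n m).card : ℝ) = (m : ℝ) - (n : ℝ) := by
    rw [Nat.card_Ioc, Nat.cast_sub hnm]
  have hflgt : l * (n : ℝ) - 1 < (m : ℝ) := Nat.sub_one_lt_floor (l * n)
  have hℓm : δ * ℓ n ≤ ℓ m := by
    have h1 : ℓ (l * (n : ℝ)) ≤ ℓ m := hanti hm1 (le_trans h1n (by nlinarith)) hmle
    exact le_trans (hratio _ hn1) h1
  have hδℓ0 : 0 ≤ δ * ℓ (n : ℝ) := le_of_lt (mul_pos hδ0 (hpos _ h1n))
  have hA : (l - 1) * (n : ℝ) - 1 ≤ (m : ℝ) - (n : ℝ) := by linarith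
  have hl1 : (0:ℝ) < l - 1 := by linarith
  have hA0 : (0:ℝ) ≤ (l - 1) * (n : ℝ) - 1 := by
    have h := mul_le_mul_of_nonneg_left hn2 (le_of_lt hl1)
    have heq : (l - 1) * (1 / (l - 1) + 1) = l := by field_simp; ring
    nlinarith
  have hmul : ((l - 1) * (n : ℝ) - 1) * (δ * ℓ n) ≤ ((m : ℝ) - (n : ℝ)) * ℓ m :=
    mul_le_mul hA hℓm hδℓ0 (by linarith)
  have hℓ1 : ℓ (n : ℝ) ≤ ℓ 1 := hanti (Set.mem_Ici.mpr (le_refl 1)) h1n h1n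
  have hδℓ : δ * ℓ (n : ℝ) ≤ δ * ℓ 1 := mul_le_mul_of_nonneg_left hℓ1 (le_of_lt hδ0)
  have hexp : ((l - 1) * (n : ℝ) - 1) * (δ * ℓ n) =
      δ * (l - 1) * ((n : ℝ) * ℓ n) - δ * ℓ (n : ℝ) := by ring
  have hfin : ((m : ℝ) - (n : ℝ)) * ℓ m ≤ ∑ k ∈ Finset.Ioc n m, ℓ (k : ℝ) := by
    rw [← hcard]; exact hsum
  show δ * (l - 1) * ((n : ℝ) * ℓ n) + -(δ * ℓ 1) ≤ ∑ k ∈ Finset.Ioc n m, ℓ (k : ℝ)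
  linarith
end
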